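/- Let $n\ge 1$ and let $\eta_0,\dots,\eta_n$ be real numbers whose maximum is attained at a unique index $k$ (i.e. $\eta_k>\eta_i$ for all $i\ne k$). Then for all $t>0$, $\int_{[0,\infty)^n} \exp\{\sum_{i=0}^{n-1} t_i\eta_i + (t-\sum_{i=0}^{n-1}t_i)\eta_n\}\,\mathbf{1}\{\sum_{i=0}^{n-1}t_i<t\}\, dt_0\cdots dt_{n-1} \le e^{t\eta_k}\prod_{i\ne k}\frac{1}{\eta_k-\eta_i}$. -/

import Mathlib

open MeasureTheory Real Set

lemma aux_int_exp {δ : ℝ} (hδ : 0 < δ) : ∫ s in Set.Ioi (0:ℝ), exp (-(δ * s)) = δ⁻¹ := by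
  have h := integral_comp_mul_left_Ioi (fun u : ℝ => exp (-u)) 0 hδ
  simp only [mul_zero] at h
  rw [show (fun s : ℝ => exp (-(δ * s))) = (fun s : ℝ => exp (-(δ * s))) from rfl]
  calc ∫ s in Set.Ioi (0:ℝ), exp (-(δ * s)) = δ⁻¹ • ∫ x in Set.Ioi (0:ℝ), exp (-x) := h
    _ = δ⁻¹ := by rw [integral_exp_neg_Ioi_zero]; simp

lemma aux_integrable_ind {δ : ℝ} (hδ : 0 < δ) :
    Integrable (Set.indicator (Set.Ici 0) fun s : ℝ => exp (-(δ * s))) := by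
  rw [integrable_indicator_iff measurableSet_Ici]
  have := exp_neg_integrableOn_Ioi 0 hδ
  simp only [neg_mul] at this
  exact (integrableOn_Ici_iff_integrableOn_Ioi).2 this

lemma aux_integral_ind {δ : ℝ} (hδ : 0 < δ) :
    ∫ s, (Set.indicator (Set.Ici 0) fun s : ℝ => exp (-(δ * s))) s = δ⁻¹ := by
  rw [integral_indicator measurableSet_Ici, integral_Ici_eq_integral_Ioi, aux_int_exp hδ]

lemma aux_Ico_bound {δ : ℝ} (M : ℝ) (hδ : 0 < δ) :
    ∫ y in Set.Ico 0 M, exp (-((M - y) * δ)) ≤ δ⁻¹ := by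
  rcases le_or_gt M 0 with hM | hM
  · rw [Ico_eq_empty (by simpa using not_lt.2 hM)]
    simp [le_of_lt (inv_pos.2 hδ)]
  · have hderiv : ∀ y : ℝ, HasDerivAt (fun y : ℝ => exp (-((M - y) * δ)) / δ)
        (exp (-((M - y) * δ))) y := by
      intro y
      have h1 : HasDerivAt (fun y : ℝ => -((M - y) * δ)) δ y := by
        simpa using (((hasDerivAt_id y).const_sub M).mul_const δ).fun_neg
      have := (h1.exp.div_const δ)
      simpa [mul_div_assoc, mul_div_cancel_right₀ _ (ne_of_gt hδ)] using this
    have hint : ∫ y in (0:ℝ)..M, exp (-((M - y) * δ))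
        = exp (-((M - M) * δ)) / δ - exp (-((M - 0) * δ)) / δ := by
      apply intervalIntegral.integral_eq_sub_of_hasDerivAt (fun y _ => hderiv y)
      apply Continuous.intervalIntegrable
      continuity
    rw [integral_Ico_eq_integral_Ioo, ← integral_Ioc_eq_integral_Ioo,
        ← intervalIntegral.integral_of_le (le_of_lt hM)]
    · rw [hint]
      simp only [sub_self, zero_mul, neg_zero, exp_zero, one_div]
      have h2 : 0 < exp (-((M - 0) * δ)) / δ := by positivity
      linarith
    
lemma prod_erase_univ {n : ℕ} (f : Fin (n+1) → ℝ) (p : Fin (n+1)) :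
    ∏ i ∈ Finset.univ.erase p, f i = ∏ i : Fin n, f (p.succAbove i) := by
  have himg : (Finset.univ : Finset (Fin n)).image p.succAbove = Finset.univ.erase p := by
    ext x
    simp only [Finset.mem_erase, Finset.mem_univ, and_true, Finset.mem_image, true_and]
    constructor
    · rintro ⟨z, -, rfl⟩; exact Fin.succAbove_ne p z
    · intro hx; obtain ⟨z, hz⟩ := Fin.exists_succAbove_eq hx; exact ⟨z, hz⟩
  rw [← himg, Finset.prod_image (fun a _ b _ h => Fin.succAbove_right_injective h)]

lemma aux_exp_eq {N : ℕ} (η : Fin (N+1) → ℝ) (k : Fin (N+1)) (T : ℝ) (x : Fin N → ℝ) :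
    exp ((∑ i, x i * η i.castSucc) + (T - ∑ i, x i) * η (Fin.last N))
      = exp (T * η k) * exp (-((T - ∑ i, x i) * (η k - η (Fin.last N))))
        * ∏ i, exp (-(x i * (η k - η i.castSucc))) := by
  rw [← Real.exp_sum, ← Real.exp_add, ← Real.exp_add]
  congr 1
  have h : ∑ i, -(x i * (η k - η i.castSucc))
      = (∑ i, x i * η i.castSucc) - (∑ i, x i) * η k := by
    rw [Finset.sum_mul, ← Finset.sum_sub_distrib]
    exact Finset.sum_congr rfl fun i _ => by ring
  rw [h]; ring

theorem waiting_time_integral_bound (n : ℕ) (hn : 1 ≤ n) (η : Fin (n + 1) → ℝ)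
    (k : Fin (n + 1)) (hk : ∀ i, i ≠ k → η i < η k) (T : ℝ) (hT : 0 < T) :
    (∫ x in {x : Fin n → ℝ | (∀ i, 0 ≤ x i) ∧ ∑ i, x i < T},
        Real.exp ((∑ i, x i * η i.castSucc) + (T - ∑ i, x i) * η (Fin.last n)))
      ≤ Real.exp (T * η k) * ∏ i ∈ Finset.univ.erase k, (η k - η i)⁻¹ := by
  obtain ⟨m, rfl⟩ := Nat.exists_eq_succ_of_ne_zero (Nat.one_le_iff_ne_zero.mp hn)
  set f : (Fin (m+1) → ℝ) → ℝ := fun x =>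
    Real.exp ((∑ i, x i * η i.castSucc) + (T - ∑ i, x i) * η (Fin.last (m+1))) with hf_def
  set S : Set (Fin (m+1) → ℝ) := {x | (∀ i, 0 ≤ x i) ∧ ∑ i, x i < T} with hS_def
  have hS : MeasurableSet S := by
    have : S = (⋂ i, {x : Fin (m+1) → ℝ | 0 ≤ x i}) ∩ {x | ∑ i, x i < T} := by
      ext x; simp [hS_def, Set.mem_iInter]
    rw [this]
    exact (MeasurableSet.iInter fun i =>
        measurableSet_le measurable_const (measurable_pi_apply i)).inter
      (measurableSet_lt (Finset.measurable_sum _ fun i _ => measurable_pi_apply i)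
        measurable_const)
  have hfc : Continuous f := by
    have h1 : Continuous fun x : Fin (m+1) → ℝ => ∑ i, x i * η i.castSucc :=
      continuous_finset_sum _ fun i _ => (continuous_apply i).mul continuous_const
    have h2 : Continuous fun x : Fin (m+1) → ℝ => ∑ i, x i :=
      continuous_finset_sum _ fun i _ => continuous_apply i
    exact Real.continuous_exp.comp (h1.add ((continuous_const.sub h2).mul continuous_const))
  have hIntS : IntegrableOn f S := by
    have hsub : S ⊆ Set.Icc (fun _ => 0) (fun _ => T) := by
      intro x hx
      rw [Set.mem_Icc]
      refine ⟨fun i => hx.1 i, fun i => le_of_lt (lt_of_le_of_lt ?_ hx.2)⟩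
      exact Finset.single_le_sum (fun i _ => hx.1 i) (Finset.mem_univ i)
    exact ((hfc.continuousOn).integrableOn_compact isCompact_Icc).mono_set hsub
  induction k using Fin.lastCases with
  | last =>
    set d : Fin (m+1) → ℝ := fun i => η (Fin.last (m+1)) - η i.castSucc with hd_def
    have hd : ∀ i, 0 < d i := fun i => sub_pos.2 (hk _ (Fin.castSucc_lt_last i).ne)
    calc (∫ x in S, f x)
        = ∫ x, Set.indicator S f x := (integral_indicator hS).symm
      _ ≤ ∫ x : Fin (m+1) → ℝ, Real.exp (T * η (Fin.last (m+1)))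
            * ∏ i, Set.indicator (Set.Ici 0) (fun s => exp (-(d i * s))) (x i) := by
          apply integral_mono_of_nonneg
          · exact Filter.Eventually.of_forall fun x =>
              Set.indicator_nonneg (fun y _ => (exp_pos _).le) x
          · exact (Integrable.fintype_prod_dep fun i => aux_integrable_ind (hd i)).const_mul _
          · refine Filter.Eventually.of_forall fun x => ?_
            beta_reduce
            by_cases hx : x ∈ S
            · rw [Set.indicator_of_mem hx]
              simp only [hf_def]
              rw [aux_exp_eq η (Fin.last (m+1)) T x]
              simp only [sub_self, mul_zero, neg_zero, Real.exp_zero, mul_one]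
              apply le_of_eq
              congr 1
              refine Finset.prod_congr rfl fun i _ => ?_
              rw [Set.indicator_of_mem (Set.mem_Ici.mpr (hx.1 i)) (fun s => exp (-(d i * s))), mul_comm]
            · rw [Set.indicator_of_notMem hx]
              exact mul_nonneg (exp_pos _).le (Finset.prod_nonneg fun i _ =>
                Set.indicator_nonneg (fun y _ => (exp_pos _).le) _)
      _ = Real.exp (T * η (Fin.last (m+1))) * ∏ i, (d i)⁻¹ := by
          rw [integral_const_mul, MeasureTheory.integral_fintype_prod_volume_eq_prod]
          congr 1
          exact Finset.prod_congr rfl fun i _ => aux_integral_ind (hd i)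
      _ = Real.exp (T * η (Fin.last (m+1)))
            * ∏ i ∈ Finset.univ.erase (Fin.last (m+1)), (η (Fin.last (m+1)) - η i)⁻¹ := by
          rw [prod_erase_univ]
          simp [Fin.succAbove_last, hd_def]
  | cast j =>
    have hkl : Fin.last (m+1) ≠ j.castSucc := (Fin.castSucc_lt_last j).ne'
    set δL : ℝ := η j.castSucc - η (Fin.last (m+1)) with hδL_def
    have hδL : 0 < δL := sub_pos.2 (hk _ hkl)
    set d : Fin m → ℝ := fun i => η j.castSucc - η ((j.succAbove i).castSucc) with hd_def
    have hd : ∀ i, 0 < d i := fun i => sub_pos.2 (hk _ (by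
      simp only [ne_eq, Fin.castSucc_inj]
      exact Fin.succAbove_ne j i))
    set e := MeasurableEquiv.piFinSuccAbove (fun _ : Fin (m+1) => ℝ) j with he_def
    have hme : MeasurePreserving (⇑e.symm) :=
      (volume_preserving_piFinSuccAbove (fun _ : Fin (m+1) => ℝ) j).symm e
    have hesymm : ∀ p : ℝ × (Fin m → ℝ), e.symm p = j.insertNth p.1 p.2 := fun p => by
      simp [he_def, MeasurableEquiv.piFinSuccAbove_symm_apply, Fin.insertNthEquiv,
        Equiv.coe_fn_mk]
    set F : ℝ × (Fin m → ℝ) → ℝ := fun p => Set.indicator S f (j.insertNth p.1 p.2) with hF_def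
    have hFi : Integrable F := by
      have h0 : Integrable (Set.indicator S f) := (integrable_indicator_iff hS).2 hIntS
      have h1 := (hme.integrable_comp_emb e.symm.measurableEmbedding).2 h0
      exact h1.congr (Filter.Eventually.of_forall fun p => by
        simp only [Function.comp_apply, hesymm, hF_def])
    have hsum : ∀ (y : ℝ) (z : Fin m → ℝ), ∑ i, (j.insertNth y z) i = y + ∑ i, z i := by
      intro y z
      rw [Fin.sum_univ_succAbove _ j]
      simp
    have hmemS : ∀ (y : ℝ) (z : Fin m → ℝ),
        (j.insertNth y z ∈ S) ↔ ((∀ i, 0 ≤ z i) ∧ (0 ≤ y ∧ y + ∑ i, z i < T)) := by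
      intro y z
      simp only [hS_def, Set.mem_setOf_eq, hsum y z]
      rw [Fin.forall_iff_succAbove j]
      simp only [Fin.insertNth_apply_same, Fin.insertNth_apply_succAbove]
      tauto
    have hFval : ∀ (z : Fin m → ℝ), (∀ i, 0 ≤ z i) → ∀ y : ℝ,
        F (y, z) = Set.indicator (Set.Ico 0 (T - ∑ i, z i))
          (fun y => (Real.exp (T * η j.castSucc) * ∏ i, Real.exp (-(z i * d i)))
            * Real.exp (-(((T - ∑ i, z i) - y) * δL))) y := by
      intro z hz y
      by_cases hy : y ∈ Set.Ico 0 (T - ∑ i, z i)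
      · have hy2 : y + ∑ i, z i < T := by
          have := hy.2
          simp only [Set.mem_Ico] at hy
          linarith [hy.2]
        have hyS : j.insertNth y z ∈ S := (hmemS y z).2 ⟨hz, hy.1, hy2⟩
        simp only [hF_def]
        rw [Set.indicator_of_mem hyS, Set.indicator_of_mem hy]
        simp only [hf_def]
        rw [aux_exp_eq η j.castSucc T (j.insertNth y z)]
        rw [Fin.prod_univ_succAbove
          (fun i : Fin (m+1) =>
            Real.exp (-((j.insertNth y z : Fin (m+1) → ℝ) i * (η j.castSucc - η i.castSucc)))) j]
        simp only [Fin.insertNth_apply_same, Fin.insertNth_apply_succAbove, sub_self, mul_zero,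
          neg_zero, Real.exp_zero, one_mul, hsum y z]
        rw [show T - (y + ∑ i, z i) = (T - ∑ i, z i) - y from by ring]
        rw [hδL_def, hd_def]
        ring
      · have hnot : j.insertNth y z ∉ S := by
          intro hc
          obtain ⟨-, hy0, hyT⟩ := (hmemS y z).1 hc
          exact hy ⟨hy0, by linarith⟩
        simp only [hF_def]
        rw [Set.indicator_of_notMem hnot, Set.indicator_of_notMem hy]
    have h0 : (∫ x in S, f x) = ∫ p : ℝ × (Fin m → ℝ), F p := by
      rw [← integral_indicator hS]
      rw [← hme.integral_comp e.symm.measurableEmbedding (Set.indicator S f)]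
      refine integral_congr_ae (Filter.Eventually.of_forall fun p => ?_)
      simp only [hesymm, hF_def]
    have h1 : (∫ p : ℝ × (Fin m → ℝ), F p) = ∫ z : Fin m → ℝ, ∫ y : ℝ, F (y, z) := by
      have hFi' : Integrable F (volume.prod volume) := by rwa [← Measure.volume_eq_prod]
      rw [Measure.volume_eq_prod]
      exact integral_prod_symm F hFi'
    have hinner_nonneg : ∀ z : Fin m → ℝ, 0 ≤ ∫ y : ℝ, F (y, z) := fun z =>
      integral_nonneg fun y => Set.indicator_nonneg (fun t _ => (exp_pos _).le) _
    have hH_int : Integrable (fun z : Fin m → ℝ => (Real.exp (T * η j.castSucc) * δL⁻¹)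
        * ∏ i, Set.indicator (Set.Ici 0) (fun s => Real.exp (-(d i * s))) (z i)) :=
      (Integrable.fintype_prod_dep fun i => aux_integrable_ind (hd i)).const_mul _
    have h2 : (∫ z : Fin m → ℝ, ∫ y : ℝ, F (y, z))
        ≤ ∫ z : Fin m → ℝ, (Real.exp (T * η j.castSucc) * δL⁻¹)
            * ∏ i, Set.indicator (Set.Ici 0) (fun s => Real.exp (-(d i * s))) (z i) := by
      apply integral_mono_of_nonneg (Filter.Eventually.of_forall hinner_nonneg) hH_int
      refine Filter.Eventually.of_forall fun z => ?_
      beta_reduce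
      by_cases hz : ∀ i, 0 ≤ z i
      · simp only [hFval z hz]
        rw [integral_indicator measurableSet_Ico, MeasureTheory.integral_const_mul]
        have hC : 0 ≤ Real.exp (T * η j.castSucc) * ∏ i, Real.exp (-(z i * d i)) := by positivity
        have hb := aux_Ico_bound (δ := δL) (T - ∑ i, z i) hδL
        calc (Real.exp (T * η j.castSucc) * ∏ i, Real.exp (-(z i * d i)))
              * ∫ y in Set.Ico 0 (T - ∑ i, z i), Real.exp (-(((T - ∑ i, z i) - y) * δL))
            ≤ (Real.exp (T * η j.castSucc) * ∏ i, Real.exp (-(z i * d i))) * δL⁻¹ :=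
              mul_le_mul_of_nonneg_left hb hC
          _ = (Real.exp (T * η j.castSucc) * δL⁻¹)
              * ∏ i, Set.indicator (Set.Ici 0) (fun s => Real.exp (-(d i * s))) (z i) := by
              rw [Finset.prod_congr rfl (fun i _ =>
                Set.indicator_of_mem (Set.mem_Ici.mpr (hz i)) (fun s => Real.exp (-(d i * s))))]
              rw [Finset.prod_congr rfl (fun i _ => by rw [mul_comm (z i) (d i)] :
                ∀ i ∈ Finset.univ, Real.exp (-(z i * d i)) = Real.exp (-(d i * z i)))]
              ring
      · have hznot : ∀ y : ℝ, F (y, z) = 0 := by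
          intro y
          simp only [hF_def]
          apply Set.indicator_of_notMem
          intro hc
          exact hz ((hmemS y z).1 hc).1
        simp only [hznot, integral_zero]
        exact mul_nonneg (by positivity) (Finset.prod_nonneg fun i _ =>
          Set.indicator_nonneg (fun t _ => (exp_pos _).le) _)
    have h3 : (∫ z : Fin m → ℝ, (Real.exp (T * η j.castSucc) * δL⁻¹)
            * ∏ i, Set.indicator (Set.Ici 0) (fun s => Real.exp (-(d i * s))) (z i))
        = Real.exp (T * η j.castSucc) * δL⁻¹ * ∏ i, (d i)⁻¹ := by
      rw [MeasureTheory.integral_const_mul, MeasureTheory.integral_fintype_prod_volume_eq_prod]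
      congr 1
      exact Finset.prod_congr rfl fun i _ => aux_integral_ind (hd i)
    have h4 : Real.exp (T * η j.castSucc)
          * ∏ i ∈ Finset.univ.erase j.castSucc, (η j.castSucc - η i)⁻¹
        = Real.exp (T * η j.castSucc) * δL⁻¹ * ∏ i, (d i)⁻¹ := by
      rw [prod_erase_univ (fun i => (η j.castSucc - η i)⁻¹) j.castSucc]
      rw [Fin.prod_univ_castSucc
        (fun i : Fin (m+1) => (η j.castSucc - η ((j.castSucc).succAbove i))⁻¹)]
      simp only [Fin.castSucc_succAbove_castSucc,
        Fin.succAbove_castSucc_of_le j (Fin.last m) (Fin.le_last j), Fin.succ_last]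
      rw [hd_def, hδL_def]
      ring
    calc (∫ x in S, f x) = ∫ z : Fin m → ℝ, ∫ y : ℝ, F (y, z) := h0.trans h1
      _ ≤ _ := h2
      _ = Real.exp (T * η j.castSucc) * δL⁻¹ * ∏ i, (d i)⁻¹ := h3
      _ = _ := h4.symm
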